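/- Let d ∈ ℕ, l ∈ ℤ_{≥0}^d, and ρ, σ, τ ∈ ℝ_+^d. There exists a constant c > 0, depending only on d, l, ρ, σ, τ, such that for every δ ∈ ℝ_+^d, all points x^0, y^0 ∈ ℝ^d with y^0 ∈ x^0 + σ·δ·[-1,1]^d, every set Q ⊂ y^0 + τ·δ·[-1,1]^d, and every polynomial f ∈ 𝒫^{d,l}, sup_{x ∈ Q} |f(x)| ≤ c · max_{λ ∈ ℤ^d, 0 ≤ λ ≤ l} |f(x^0 + ρ·δ·λ)|. -/

import Mathlib

open Finset Polynomial

/-- 1-d Lagrange identity: a monomial of degree `m ≤ n` is reproduced by interpolation at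
`n+1` distinct nodes. -/
lemma oneD_interp (n m : ℕ) (hm : m ≤ n) (v : ℕ → ℝ)
    (hv : Set.InjOn v (Finset.range (n + 1))) (t : ℝ) :
    ∑ k : Fin (n + 1), v k ^ m *
      Polynomial.eval t (Lagrange.basis (Finset.range (n + 1)) v k) = t ^ m := by
  have hdeg : (Polynomial.X ^ m : Polynomial ℝ).degree < (Finset.range (n + 1)).card := by
    rw [Polynomial.degree_X_pow, Finset.card_range]
    exact_mod_cast Nat.lt_succ_of_le hm
  have h := Lagrange.eq_interpolate hv hdeg
  have h2 := congrArg (Polynomial.eval t) h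
  rw [Polynomial.eval_pow, Polynomial.eval_X, Lagrange.interpolate_apply,
    Polynomial.eval_finset_sum] at h2
  rw [Fin.sum_univ_eq_sum_range
    (fun k => v k ^ m * Polynomial.eval t (Lagrange.basis (Finset.range (n + 1)) v k))]
  rw [h2]
  refine Finset.sum_congr rfl fun k _ => ?_
  simp [Polynomial.eval_mul, Polynomial.eval_C]

/-- Multivariate Lagrange interpolation formula on a product grid, for polynomials of
coordinate degree at most `l`. -/
lemma mv_interp {d : ℕ} (l : Fin d → ℕ) (v : (i : Fin d) → ℕ → ℝ)
    (hv : ∀ i, Set.InjOn (v i) (Finset.range (l i + 1)))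
    (f : MvPolynomial (Fin d) ℝ) (hf : ∀ i, f.degreeOf i ≤ l i) (x : Fin d → ℝ) :
    MvPolynomial.eval x f = ∑ lam : (i : Fin d) → Fin (l i + 1),
      MvPolynomial.eval (fun i => v i (lam i)) f *
        ∏ i, Polynomial.eval (x i) (Lagrange.basis (Finset.range (l i + 1)) (v i) (lam i)) := by
  classical
  rw [MvPolynomial.eval_eq']
  simp_rw [MvPolynomial.eval_eq', Finset.sum_mul]
  rw [Finset.sum_comm]
  refine Finset.sum_congr rfl fun m hm => ?_
  have hml : ∀ i, m i ≤ l i := fun i =>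
    le_trans (by rw [MvPolynomial.degreeOf_eq_sup]; exact Finset.le_sup (f := fun m => m i) hm : m i ≤ f.degreeOf i)
      (hf i)
  simp_rw [mul_assoc, ← Finset.mul_sum]
  congr 1
  calc ∏ i, x i ^ m i
      = ∏ i, ∑ k : Fin (l i + 1), v i k ^ m i *
          Polynomial.eval (x i) (Lagrange.basis (Finset.range (l i + 1)) (v i) k) :=
        Finset.prod_congr rfl fun i _ => (oneD_interp (l i) (m i) (hml i) (v i) (hv i) (x i)).symm
    _ = ∑ lam : (i : Fin d) → Fin (l i + 1), ∏ i, (v i (lam i) ^ m i *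
          Polynomial.eval (x i) (Lagrange.basis (Finset.range (l i + 1)) (v i) (lam i))) := by
        rw [Finset.prod_univ_sum (fun i => (Finset.univ : Finset (Fin (l i + 1))))]
        rw [Fintype.piFinset_univ]
    _ = ∑ lam : (i : Fin d) → Fin (l i + 1), (∏ i, v i (lam i) ^ m i) *
          ∏ i, Polynomial.eval (x i) (Lagrange.basis (Finset.range (l i + 1)) (v i) (lam i)) := by
        simp_rw [Finset.prod_mul_distrib]

/-- Grid-sampling inequality for polynomials of coordinate degree at most `l`. -/
theorem statement14 (d : ℕ) (l : Fin d → ℕ) (ρ σ τ : Fin d → ℝ)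
    (hρ : ∀ i, 0 < ρ i) (hσ : ∀ i, 0 < σ i) (hτ : ∀ i, 0 < τ i) :
    ∃ c > 0, ∀ δ : Fin d → ℝ, (∀ i, 0 < δ i) → ∀ x₀ y₀ : Fin d → ℝ,
      (∀ i, |y₀ i - x₀ i| ≤ σ i * δ i) →
      ∀ Q : Set (Fin d → ℝ), (∀ z ∈ Q, ∀ i, |z i - y₀ i| ≤ τ i * δ i) →
      ∀ f : MvPolynomial (Fin d) ℝ, (∀ i, f.degreeOf i ≤ l i) →
      ∀ x ∈ Q, |MvPolynomial.eval x f| ≤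
        c * ⨆ lam : (j : Fin d) → Fin (l j + 1),
          |MvPolynomial.eval (fun i => x₀ i + ρ i * δ i * ((lam i : ℕ) : ℝ)) f| := by
  classical
  set M : Fin d → ℝ := fun i => (σ i + τ i + ρ i * l i) / ρ i with hM
  have hMpos : ∀ i, 0 < M i := fun i => by
    have h1 := add_pos (hσ i) (hτ i)
    have h2 : (0 : ℝ) ≤ ρ i * l i := mul_nonneg (hρ i).le (Nat.cast_nonneg _)
    exact div_pos (by linarith) (hρ i)
  refine ⟨∏ i, ((l i + 1 : ℝ) * M i ^ l i), ?_, ?_⟩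
  · apply Finset.prod_pos; intro i _
    have := hMpos i; positivity
  intro δ hδ x₀ y₀ hy Q hQ f hf x hx
  have hrd : ∀ i, 0 < ρ i * δ i := fun i => mul_pos (hρ i) (hδ i)
  set v : (i : Fin d) → ℕ → ℝ := fun i k => x₀ i + ρ i * δ i * k with hvdef
  have hvinj : ∀ i, Set.InjOn (v i) (Finset.range (l i + 1)) := by
    intro i a _ b _ hab
    have h1 : ρ i * δ i * (a : ℝ) = ρ i * δ i * (b : ℝ) := by
      simp only [hvdef] at hab; linarith
    have h2 := mul_left_cancel₀ (ne_of_gt (hrd i)) h1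
    exact_mod_cast h2
  have hid := mv_interp l v hvinj f hf x
  -- bound each basis polynomial at x
  have hB : ∀ i (k : Fin (l i + 1)),
      |Polynomial.eval (x i) (Lagrange.basis (Finset.range (l i + 1)) (v i) (k : ℕ))| ≤
        M i ^ l i := by
    intro i k
    rw [Lagrange.basis, Polynomial.eval_prod, Finset.abs_prod]
    have hcard : ((Finset.range (l i + 1)).erase (k : ℕ)).card = l i := by
      rw [Finset.card_erase_of_mem (Finset.mem_range.mpr k.isLt), Finset.card_range]
      omega
    calc ∏ j ∈ (Finset.range (l i + 1)).erase (k : ℕ),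
          |Polynomial.eval (x i) (Lagrange.basisDivisor (v i k) (v i j))|
        ≤ ∏ _j ∈ (Finset.range (l i + 1)).erase (k : ℕ), M i := by
          refine Finset.prod_le_prod (fun _ _ => abs_nonneg _) (fun j hj => ?_)
          obtain ⟨hjk, hjr⟩ := Finset.mem_erase.mp hj
          have hjle : j ≤ l i := Nat.lt_succ_iff.mp (Finset.mem_range.mp hjr)
          rw [Lagrange.basisDivisor, Polynomial.eval_mul, Polynomial.eval_C,
            Polynomial.eval_sub, Polynomial.eval_X, Polynomial.eval_C, abs_mul, abs_inv]
          -- numerator bound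
          have hnum : |x i - v i j| ≤ δ i * (σ i + τ i + ρ i * l i) := by
            have h1 := hQ x hx i
            have h2 := hy i
            have h3 : |x i - v i j| ≤ |x i - y₀ i| + |y₀ i - x₀ i| + |ρ i * δ i * (j : ℝ)| := by
              simp only [hvdef]
              calc |x i - (x₀ i + ρ i * δ i * (j : ℝ))|
                  = |(x i - y₀ i) + (y₀ i - x₀ i) + (-(ρ i * δ i * (j : ℝ)))| := by ring_nf
                _ ≤ _ := by
                    refine (abs_add_le _ _).trans ?_
                    rw [abs_neg]
                    exact add_le_add (abs_add_le _ _) le_rfl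
            have h4 : |ρ i * δ i * (j : ℝ)| ≤ ρ i * δ i * l i := by
              rw [abs_of_nonneg (mul_nonneg (hrd i).le (Nat.cast_nonneg _))]
              have : (j : ℝ) ≤ (l i : ℝ) := by exact_mod_cast hjle
              nlinarith [hrd i]
            nlinarith [h1, h2, h3, h4]
          -- denominator bound
          have hden : ρ i * δ i ≤ |v i k - v i j| := by
            have hsub : v i (k : ℕ) - v i j = ρ i * δ i * (((k : ℕ) : ℝ) - (j : ℝ)) := by
              simp only [hvdef]; ring
            rw [hsub, abs_mul, abs_of_pos (hrd i)]
            have hone : (1 : ℝ) ≤ |((k : ℕ) : ℝ) - (j : ℝ)| := by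
              have hkz : ((k : ℕ) : ℤ) - (j : ℤ) ≠ 0 := by
                intro h; apply hjk; omega
              have hre : ((k : ℕ) : ℝ) - (j : ℝ) = ((((k : ℕ) : ℤ) - (j : ℤ) : ℤ) : ℝ) := by
                push_cast; ring
              rw [hre, ← Int.cast_abs]
              exact_mod_cast Int.one_le_abs hkz
            nlinarith [hrd i, abs_nonneg (((k : ℕ) : ℝ) - (j : ℝ))]
          rw [mul_comm]
          rw [← div_eq_mul_inv]
          have : δ i * (σ i + τ i + ρ i * l i) / (ρ i * δ i) = M i := by
            rw [hM]
            have h1 : δ i ≠ 0 := (hδ i).ne'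
            have h2 : ρ i ≠ 0 := (hρ i).ne'
            field_simp
          rw [← this]
          exact div_le_div₀
            (mul_nonneg (hδ i).le (by
              have h1 := add_pos (hσ i) (hτ i)
              have h2 : (0 : ℝ) ≤ ρ i * l i := mul_nonneg (hρ i).le (Nat.cast_nonneg _)
              linarith)) hnum (hrd i) hden
      _ = M i ^ l i := by rw [Finset.prod_const, hcard]
  -- the sup
  set S := ⨆ lam : (j : Fin d) → Fin (l j + 1),
      |MvPolynomial.eval (fun i => x₀ i + ρ i * δ i * ((lam i : ℕ) : ℝ)) f| with hS
  have hSb0 : ∀ lam : (j : Fin d) → Fin (l j + 1),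
      |MvPolynomial.eval (fun i => x₀ i + ρ i * δ i * ((lam i : ℕ) : ℝ)) f| ≤ S := by
    intro lam
    rw [hS]
    exact le_ciSup (f := fun lam : (j : Fin d) → Fin (l j + 1) =>
      |MvPolynomial.eval (fun i => x₀ i + ρ i * δ i * ((lam i : ℕ) : ℝ)) f|)
      (Set.Finite.bddAbove (Set.finite_range _)) lam
  have hSb : ∀ lam : (j : Fin d) → Fin (l j + 1),
      |MvPolynomial.eval (fun i => v i (lam i)) f| ≤ S := fun lam => hSb0 lam
  have hS0 : 0 ≤ S := le_trans (abs_nonneg _) (hSb (fun _ => 0))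
  rw [hid]
  have hMprod : (0 : ℝ) ≤ ∏ i, M i ^ l i :=
    Finset.prod_nonneg fun i _ => pow_nonneg (hMpos i).le _
  calc |∑ lam : (i : Fin d) → Fin (l i + 1), MvPolynomial.eval (fun i => v i (lam i)) f *
          ∏ i, Polynomial.eval (x i) (Lagrange.basis (Finset.range (l i + 1)) (v i) (lam i))|
      ≤ ∑ lam : (i : Fin d) → Fin (l i + 1), |MvPolynomial.eval (fun i => v i (lam i)) f| *
          ∏ i, |Polynomial.eval (x i) (Lagrange.basis (Finset.range (l i + 1)) (v i) (lam i))| := by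
        refine (Finset.abs_sum_le_sum_abs _ _).trans (le_of_eq ?_)
        refine Finset.sum_congr rfl fun lam _ => ?_
        rw [abs_mul, Finset.abs_prod]
    _ ≤ ∑ _lam : (i : Fin d) → Fin (l i + 1), S * ∏ i, M i ^ l i := by
        refine Finset.sum_le_sum fun lam _ => ?_
        refine mul_le_mul (hSb lam) ?_ (Finset.prod_nonneg fun i _ => abs_nonneg _) hS0
        exact Finset.prod_le_prod (fun i _ => abs_nonneg _) (fun i _ => hB i (lam i))
    _ = (Fintype.card ((i : Fin d) → Fin (l i + 1)) : ℝ) * (S * ∏ i, M i ^ l i) := by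
        rw [Finset.sum_const, Finset.card_univ, nsmul_eq_mul]
    _ = (∏ i, ((l i + 1 : ℝ) * M i ^ l i)) * S := by
        rw [Fintype.card_pi]
        simp only [Fintype.card_fin]
        rw [Finset.prod_mul_distrib]
        push_cast
        ring
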